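/- Norm identity between algebraic and sectional curvature tensors: for every algebraic curvature tensor R on T with Sec := Φ⁺R and every orthonormal basis E₁, …, E_m of T, Σ_{μ,ν,α,β=1}^m Sec(E_μ,E_ν;E_α,E_β)² = 12·Σ_{μ,ν,α,β=1}^m R(E_μ,E_ν;E_α,E_β)². -/
import Mathlib


open scoped BigOperators

variable {T : Type*} [NormedAddCommGroup T] [InnerProductSpace ℝ T] [FiniteDimensional ℝ T]

/-- A map `T → T → T → T → ℝ` that is linear in each of its four arguments. -/
def IsQuadrilinear (R : T → T → T → T → ℝ) : Prop :=
  (∀ Y U V, IsLinearMap ℝ fun X => R X Y U V) ∧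
  (∀ X U V, IsLinearMap ℝ fun Y => R X Y U V) ∧
  (∀ X Y V, IsLinearMap ℝ fun U => R X Y U V) ∧
  (∀ X Y U, IsLinearMap ℝ fun V => R X Y U V)

/-- An algebraic curvature tensor on `T`. -/
def IsAlgCurv (R : T → T → T → T → ℝ) : Prop :=
  IsQuadrilinear R ∧
  (∀ X Y U V : T, R X Y U V = -R Y X U V) ∧
  (∀ X Y U V : T, R X Y U V = -R X Y V U) ∧
  (∀ X Y Z V : T, R X Y Z V + R Y Z X V + R Z X Y V = 0)

/-- `(Φ⁺R)(X,Y;U,V) := −2·(R(X,U;Y,V) + R(X,V;Y,U))`. -/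
noncomputable def PhiPlus (R : T → T → T → T → ℝ) : T → T → T → T → ℝ :=
  fun X Y U V => -2 * (R X U Y V + R X V Y U)

section aux
variable {ι : Type*} [Fintype ι]

lemma sum4_swap12 (f : ι → ι → ι → ι → ℝ) :
    ∑ a, ∑ b, ∑ c, ∑ d, f a b c d = ∑ a, ∑ b, ∑ c, ∑ d, f b a c d :=
  Finset.sum_comm

lemma sum4_swap23 (f : ι → ι → ι → ι → ℝ) :
    ∑ a, ∑ b, ∑ c, ∑ d, f a b c d = ∑ a, ∑ b, ∑ c, ∑ d, f a c b d :=
  Finset.sum_congr rfl fun a _ => Finset.sum_comm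

lemma sum4_swap34 (f : ι → ι → ι → ι → ℝ) :
    ∑ a, ∑ b, ∑ c, ∑ d, f a b c d = ∑ a, ∑ b, ∑ c, ∑ d, f a b d c :=
  Finset.sum_congr rfl fun a _ => Finset.sum_congr rfl fun b _ => Finset.sum_comm

lemma sum4_swap13 (f : ι → ι → ι → ι → ℝ) :
    ∑ a, ∑ b, ∑ c, ∑ d, f a b c d = ∑ a, ∑ b, ∑ c, ∑ d, f c b a d := by
  calc ∑ a, ∑ b, ∑ c, ∑ d, f a b c d
      = ∑ a, ∑ b, ∑ c, ∑ d, f b a c d := sum4_swap12 f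
    _ = ∑ a, ∑ b, ∑ c, ∑ d, f c a b d := sum4_swap23 (fun a b c d => f b a c d)
    _ = ∑ a, ∑ b, ∑ c, ∑ d, f c b a d := sum4_swap12 (fun a b c d => f c a b d)

end aux

lemma algCurv_pair_symm {R : T → T → T → T → ℝ} (hR : IsAlgCurv R) (X Y U V : T) :
    R X Y U V = R U V X Y := by
  obtain ⟨-, h1, h2, hB⟩ := hR
  have b1 := hB X U Y V
  have b2 := hB U Y V X
  have b3 := hB Y V X U
  have b4 := hB V X U Y
  have a1 := h2 U Y X V
  have a2 := h2 V X Y U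
  have a3 := h2 X U V Y
  have a4 := h2 Y V U X
  have c1 := h1 X Y U V
  have c2 := h2 X Y U V
  have c3 := h1 V U Y X
  have c4 := h2 U V Y X
  linarith

/-- norm identity `|Sec|² = 12·|R|²` in terms of an orthonormal basis. -/
theorem secCurv_norm_identity {m : ℕ} (E : OrthonormalBasis (Fin m) ℝ T)
    (R : T → T → T → T → ℝ) (hR : IsAlgCurv R) :
    ∑ μ : Fin m, ∑ ν : Fin m, ∑ α : Fin m, ∑ β : Fin m,
        (PhiPlus R (E μ) (E ν) (E α) (E β)) ^ 2 =
      12 * ∑ μ : Fin m, ∑ ν : Fin m, ∑ α : Fin m, ∑ β : Fin m,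
        (R (E μ) (E ν) (E α) (E β)) ^ 2 := by
  obtain ⟨hQ, h1, h2, hB⟩ := hR
  set r : Fin m → Fin m → Fin m → Fin m → ℝ := fun a b c d => R (E a) (E b) (E c) (E d) with hr
  have pair : ∀ a b c d, r a b c d = r c d a b := fun a b c d =>
    algCurv_pair_symm ⟨hQ, h1, h2, hB⟩ _ _ _ _
  have anti1 : ∀ a b c d, r a b c d = -r b a c d := fun a b c d => h1 _ _ _ _
  have anti2 : ∀ a b c d, r a b c d = -r a b d c := fun a b c d => h2 _ _ _ _
  have P1 : ∀ a b c d, r a c b d = r a b c d - r c b a d := by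
    intro a b c d
    have := hB (E a) (E c) (E b) (E d)
    have := h1 (E b) (E a) (E c) (E d)
    simp only [hr]
    linarith
  set S : ℝ := ∑ a : Fin m, ∑ b : Fin m, ∑ c : Fin m, ∑ d : Fin m, (r a b c d) ^ 2 with hS
  set K : ℝ := ∑ a : Fin m, ∑ b : Fin m, ∑ c : Fin m, ∑ d : Fin m,
      r a c b d * r a d b c with hK
  -- A = S
  have hA : (∑ a : Fin m, ∑ b : Fin m, ∑ c : Fin m, ∑ d : Fin m, (r a c b d) ^ 2) = S := by
    rw [hS]; exact (sum4_swap23 (fun a b c d => (r a b c d) ^ 2)).symm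
  -- B = S
  have hBsum : (∑ a : Fin m, ∑ b : Fin m, ∑ c : Fin m, ∑ d : Fin m, (r a d b c) ^ 2) = S := by
    calc (∑ a : Fin m, ∑ b : Fin m, ∑ c : Fin m, ∑ d : Fin m, (r a d b c) ^ 2)
        = ∑ a : Fin m, ∑ b : Fin m, ∑ c : Fin m, ∑ d : Fin m, (r a c b d) ^ 2 :=
          (sum4_swap34 (fun a b c d => (r a d b c) ^ 2)).symm ▸ rfl
      _ = S := hA
  -- K1 = -K
  have hK1 : (∑ a : Fin m, ∑ b : Fin m, ∑ c : Fin m, ∑ d : Fin m,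
      r a b c d * r a d b c) = -K := by
    calc (∑ a : Fin m, ∑ b : Fin m, ∑ c : Fin m, ∑ d : Fin m, r a b c d * r a d b c)
        = ∑ a : Fin m, ∑ b : Fin m, ∑ c : Fin m, ∑ d : Fin m, r a c b d * r a d c b :=
          sum4_swap23 (fun a b c d => r a b c d * r a d b c)
      _ = ∑ a : Fin m, ∑ b : Fin m, ∑ c : Fin m, ∑ d : Fin m, -(r a c b d * r a d b c) := by
          refine Finset.sum_congr rfl fun a _ => Finset.sum_congr rfl fun b _ =>
            Finset.sum_congr rfl fun c _ => Finset.sum_congr rfl fun d _ => ?_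
          rw [anti2 a d c b]; ring
      _ = -K := by rw [hK]; simp [Finset.sum_neg_distrib]
  -- K2 = -S
  have hK2 : (∑ a : Fin m, ∑ b : Fin m, ∑ c : Fin m, ∑ d : Fin m,
      r c b a d * r a d b c) = -S := by
    calc (∑ a : Fin m, ∑ b : Fin m, ∑ c : Fin m, ∑ d : Fin m, r c b a d * r a d b c)
        = ∑ a : Fin m, ∑ b : Fin m, ∑ c : Fin m, ∑ d : Fin m, r a b c d * r c d b a :=
          sum4_swap13 (fun a b c d => r c b a d * r a d b c)
      _ = ∑ a : Fin m, ∑ b : Fin m, ∑ c : Fin m, ∑ d : Fin m, -((r a b c d) ^ 2) := by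
          refine Finset.sum_congr rfl fun a _ => Finset.sum_congr rfl fun b _ =>
            Finset.sum_congr rfl fun c _ => Finset.sum_congr rfl fun d _ => ?_
          have e1 : r c d b a = -r c d a b := anti2 c d b a
          have e2 : r c d a b = r a b c d := (pair a b c d).symm
          rw [e1, e2]; ring
      _ = -S := by rw [hS]; simp [Finset.sum_neg_distrib]
  -- 2K = S
  have hKS : 2 * K = S := by
    have hsplit : K = (∑ a : Fin m, ∑ b : Fin m, ∑ c : Fin m, ∑ d : Fin m,
        r a b c d * r a d b c) - (∑ a : Fin m, ∑ b : Fin m, ∑ c : Fin m, ∑ d : Fin m,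
        r c b a d * r a d b c) := by
      rw [hK]
      simp only [← Finset.sum_sub_distrib]
      refine Finset.sum_congr rfl fun a _ => Finset.sum_congr rfl fun b _ =>
        Finset.sum_congr rfl fun c _ => Finset.sum_congr rfl fun d _ => ?_
      rw [P1 a b c d]; ring
    rw [hK1, hK2] at hsplit
    linarith
  -- expand LHS
  have expand : (∑ μ : Fin m, ∑ ν : Fin m, ∑ α : Fin m, ∑ β : Fin m,
      (PhiPlus R (E μ) (E ν) (E α) (E β)) ^ 2) =
      ∑ a : Fin m, ∑ b : Fin m, ∑ c : Fin m, ∑ d : Fin m,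
        (4 * (r a c b d) ^ 2 + (8 * (r a c b d * r a d b c) + 4 * (r a d b c) ^ 2)) := by
    refine Finset.sum_congr rfl fun a _ => Finset.sum_congr rfl fun b _ =>
      Finset.sum_congr rfl fun c _ => Finset.sum_congr rfl fun d _ => ?_
    simp only [PhiPlus, hr]
    ring
  rw [expand]
  simp only [Finset.sum_add_distrib, ← Finset.mul_sum]
  rw [hA, hBsum, ← hK]
  linarith
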